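/- For each fixed d ≥ 1, the generating function Σ_λ t^{mod'_d(λ)} x^{Γ(λ)}, summed over all nonempty integer partitions, equals x(tx^{d+1} + (1−tx)^d(x−1)) / ((1−x−tx)((1−tx)^d(x−1) + x^{d+1})). -/

import Mathlib

/-- A partition: a nonempty weakly decreasing list of positive integers. -/
def IsPartition (l : List ℕ) : Prop :=
  l ≠ [] ∧ l.Pairwise (· ≥ ·) ∧ ∀ x ∈ l, 0 < x

/-- The perimeter of a partition: largest part plus number of parts minus 1. -/
def perim (l : List ℕ) : ℕ := l.headI + l.length - 1

/-- Number of repeated parts: indices i with λ_i = λ_{i+1}. -/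
def repStat (l : List ℕ) : ℕ :=
  ((List.range (l.length - 1)).filter fun i => l.getD i 0 = l.getD (i + 1) 0).length

/-- Number of even parts. -/
def evenStat (l : List ℕ) : ℕ := l.countP fun x => x % 2 = 0

/-- dif_d(λ): number of indices i with λ_i − λ_{i+1} < d. -/
def difStat (d : ℕ) (l : List ℕ) : ℕ :=
  ((List.range (l.length - 1)).filter fun i => l.getD i 0 - l.getD (i + 1) 0 < d).length

/-- mod′_d(λ): number of parts not congruent to 1 mod d+1. -/
def modStat (d : ℕ) (l : List ℕ) : ℕ := l.countP fun x => ¬ x % (d + 1) = 1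


noncomputable def wgt (d a : ℕ) : Polynomial ℤ := if a % (d+1) = 1 then 1 else Polynomial.X

noncomputable def Hp (d : ℕ) : ℕ → ℕ → Polynomial ℤ
  | _, 0 => 1
  | 0, _+1 => 0
  | m+1, j+1 => Hp d m (j+1) + wgt d (m+1) * Hp d (m+1) j
  termination_by m j => m + j

@[simp] lemma Hp_zero (d m : ℕ) : Hp d m 0 = 1 := by cases m <;> simp [Hp]
@[simp] lemma Hp_zero_succ (d j : ℕ) : Hp d 0 (j+1) = 0 := by simp [Hp]
lemma Hp_succ_succ (d m j : ℕ) :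
    Hp d (m+1) (j+1) = Hp d m (j+1) + wgt d (m+1) * Hp d (m+1) j := by
  rw [Hp]

def Pset (m j : ℕ) : Set (List ℕ) :=
  {l | l.Pairwise (· ≥ ·) ∧ l.length = j ∧ ∀ x ∈ l, 0 < x ∧ x ≤ m}

noncomputable def W (d : ℕ) (l : List ℕ) : Polynomial ℤ := (l.map (wgt d)).prod

@[simp] lemma W_nil (d : ℕ) : W d [] = 1 := rfl
@[simp] lemma W_cons (d a : ℕ) (l : List ℕ) : W d (a :: l) = wgt d a * W d l := by
  simp [W]

lemma X_pow_modStat (d : ℕ) (l : List ℕ) :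
    (Polynomial.X : Polynomial ℤ) ^ modStat d l = W d l := by
  induction l with
  | nil => simp [modStat]
  | cons a l ih =>
    have h1 : modStat d (a :: l) = (if a % (d+1) = 1 then 0 else 1) + modStat d l := by
      by_cases h : a % (d+1) = 1 <;> simp [modStat, List.countP_cons, h, Nat.add_comm]
    rw [h1, pow_add, W_cons, ← ih, wgt]
    by_cases h : a % (d+1) = 1 <;> simp [h]

lemma Pset_zero (m : ℕ) : Pset m 0 = {([] : List ℕ)} := by
  ext l
  simp only [Pset, Set.mem_setOf_eq, Set.mem_singleton_iff, List.length_eq_zero_iff]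
  constructor
  · rintro ⟨-, h, -⟩; exact h
  · rintro rfl; simp

lemma Pset_zero_succ (j : ℕ) : Pset 0 (j+1) = ∅ := by
  ext l
  simp only [Pset, Set.mem_setOf_eq, Set.mem_empty_iff_false, iff_false, not_and]
  rintro - hlen hb
  cases l with
  | nil => simp at hlen
  | cons a l => rcases hb a (by simp) with ⟨h1, h2⟩; omega

lemma Pset_succ (m j : ℕ) :
    Pset (m+1) (j+1) = Pset m (j+1) ∪ (List.cons (m+1)) '' Pset (m+1) j := by
  ext l
  constructor
  · rintro ⟨hs, hlen, hb⟩
    cases l with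
    | nil => simp at hlen
    | cons a l =>
      rcases Nat.lt_or_ge a (m+1) with h | h
      · left
        refine ⟨hs, hlen, ?_⟩
        intro x hx
        rcases hb x hx with ⟨h1, h2⟩
        refine ⟨h1, ?_⟩
        rcases List.mem_cons.1 hx with rfl | hx'
        · omega
        · have := (List.pairwise_cons.1 hs).1 x hx'
          omega
      · have ha : a = m+1 := by rcases hb a (by simp) with ⟨-, h2⟩; omega
        right
        subst ha
        exact ⟨l, ⟨(List.pairwise_cons.1 hs).2, by simpa using hlen,
          fun x hx => hb x (by simp [hx])⟩, rfl⟩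
  · rintro (⟨hs, hlen, hb⟩ | ⟨l', ⟨hs, hlen, hb⟩, rfl⟩)
    · exact ⟨hs, hlen, fun x hx => ⟨(hb x hx).1, by have := (hb x hx).2; omega⟩⟩
    · refine ⟨List.pairwise_cons.2 ⟨fun b hb' => (hb b hb').2, hs⟩, by simp [hlen], ?_⟩
      intro x hx
      rcases List.mem_cons.1 hx with rfl | hx'
      · omega
      · exact hb x hx'

lemma Pset_key (d : ℕ) : ∀ N m j, m + j ≤ N →
    (Pset m j).Finite ∧ (∑ᶠ l ∈ Pset m j, W d l) = Hp d m j := by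
  intro N
  induction N with
  | zero =>
    intro m j h
    obtain ⟨rfl, rfl⟩ : m = 0 ∧ j = 0 := by omega
    rw [Pset_zero]
    exact ⟨Set.finite_singleton _, by simp [finsum_mem_singleton]⟩
  | succ N ih =>
    intro m j h
    match m, j with
    | m, 0 =>
      rw [Pset_zero]
      exact ⟨Set.finite_singleton _, by simp [finsum_mem_singleton]⟩
    | 0, j+1 =>
      rw [Pset_zero_succ]
      simp [finsum_mem_empty]
    | m+1, j+1 =>
      obtain ⟨hf1, he1⟩ := ih m (j+1) (by omega)
      obtain ⟨hf2, he2⟩ := ih (m+1) j (by omega)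
      have hdisj : Disjoint (Pset m (j+1)) ((List.cons (m+1)) '' Pset (m+1) j) := by
        rw [Set.disjoint_right]
        rintro l ⟨l', ⟨-, -, -⟩, rfl⟩ ⟨-, -, hb⟩
        have := (hb (m+1) (by simp)).2
        omega
      have hinj : Set.InjOn (List.cons (m+1)) (Pset (m+1) j) := by
        intro a _ b _ hab
        simpa using hab
      constructor
      · rw [Pset_succ]
        exact hf1.union (hf2.image _)
      · rw [Pset_succ, finsum_mem_union hdisj hf1 (hf2.image _), he1,
          finsum_mem_image hinj, Hp_succ_succ]
        congr 1
        rw [← he2, finsum_mem_eq_finite_toFinset_sum _ hf2,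
          finsum_mem_eq_finite_toFinset_sum _ hf2, Finset.mul_sum]
        exact Finset.sum_congr rfl fun l _ => (W_cons d (m+1) l)

noncomputable def cfun (d n : ℕ) : Polynomial ℤ :=
  ∑ m ∈ Finset.Icc 1 n, wgt d m * Hp d m (n - m)

lemma partSet_eq (n : ℕ) :
    {l : List ℕ | IsPartition l ∧ perim l = n} =
      ⋃ m ∈ (↑(Finset.Icc 1 n) : Set ℕ), (List.cons m) '' Pset m (n - m) := by
  ext l
  simp only [Set.mem_setOf_eq, Set.mem_iUnion, Finset.mem_coe, Finset.mem_Icc, Set.mem_image]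
  constructor
  · rintro ⟨⟨hne, hs, hp⟩, hperim⟩
    cases l with
    | nil => exact absurd rfl hne
    | cons a l' =>
      have ha : 0 < a := hp a (by simp)
      have hlen : (a :: l').length = l'.length + 1 := by simp
      have hperim' : a + l'.length = n := by
        simp only [perim, List.headI] at hperim
        omega
      refine ⟨a, ⟨ha, by omega⟩, l', ⟨(List.pairwise_cons.1 hs).2, by omega, ?_⟩, rfl⟩
      intro x hx
      exact ⟨hp x (by simp [hx]), (List.pairwise_cons.1 hs).1 x hx⟩
  · rintro ⟨m, ⟨hm1, hmn⟩, l', ⟨hs, hlen, hb⟩, rfl⟩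
    refine ⟨⟨by simp, List.pairwise_cons.2 ⟨fun b hb' => (hb b hb').2, hs⟩, ?_⟩, ?_⟩
    · intro x hx
      rcases List.mem_cons.1 hx with rfl | hx'
      · exact hm1
      · exact (hb x hx').1
    · simp only [perim, List.headI, List.length_cons, hlen]
      omega

lemma finsum_part (d n : ℕ) :
    (∑ᶠ l ∈ {l : List ℕ | IsPartition l ∧ perim l = n},
      (Polynomial.X : Polynomial ℤ) ^ modStat d l) = cfun d n := by
  rw [partSet_eq]
  have hpd : (↑(Finset.Icc 1 n) : Set ℕ).PairwiseDisjoint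
      (fun m => (List.cons m) '' Pset m (n - m)) := by
    intro a _ b _ hab
    simp only [Function.onFun, Set.disjoint_left]
    rintro l ⟨la, _, rfl⟩ ⟨lb, _, h⟩
    exact hab (by injection h with h1 _; exact h1.symm)
  rw [finsum_mem_biUnion hpd (Finset.finite_toSet _)
    (fun m _ => ((Pset_key d (m + (n - m)) m (n-m) le_rfl).1.image _)),
    finsum_mem_coe_finset]
  refine Finset.sum_congr rfl fun m hm => ?_
  have hinj : Set.InjOn (List.cons m) (Pset m (n - m)) := fun a _ b _ hab => by
    simpa using hab
  rw [finsum_mem_image hinj]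
  have hfin := (Pset_key d (m + (n-m)) m (n-m) le_rfl)
  calc (∑ᶠ l ∈ Pset m (n-m), (Polynomial.X : Polynomial ℤ) ^ modStat d (m :: l))
      = ∑ᶠ l ∈ Pset m (n-m), wgt d m * W d l := by
        exact finsum_mem_congr rfl fun l _ => by rw [X_pow_modStat, W_cons]
    _ = wgt d m * Hp d m (n - m) := by
        rw [finsum_mem_eq_finite_toFinset_sum _ hfin.1, ← Finset.mul_sum]
        congr 1
        exact (finsum_mem_eq_finite_toFinset_sum _ hfin.1).symm.trans hfin.2

namespace GFAux

open PowerSeries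

noncomputable abbrev tt : PowerSeries (Polynomial ℤ) := PowerSeries.C Polynomial.X

noncomputable def Gs (d m : ℕ) : PowerSeries (Polynomial ℤ) := PowerSeries.mk (Hp d m)

noncomputable def Bs (d : ℕ) : PowerSeries (Polynomial ℤ) :=
  (1 - PowerSeries.X) * (1 - tt * PowerSeries.X) ^ d

@[simp] lemma Gs_zero (d : ℕ) : Gs d 0 = 1 := by
  ext n
  cases n <;> simp [Gs, coeff_mk, coeff_one]

lemma Gs_step (d m : ℕ) :
    (1 - PowerSeries.C (wgt d (m+1)) * PowerSeries.X) * Gs d (m+1) = Gs d m := by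
  ext n
  rw [sub_mul, one_mul, mul_assoc, map_sub]
  cases n with
  | zero => simp [Gs, coeff_mk]
  | succ n =>
    rw [coeff_C_mul, coeff_succ_X_mul]
    simp only [Gs, coeff_mk, Hp_succ_succ]
    ring_nf

lemma wgt_one (d : ℕ) (hd : 1 ≤ d) : wgt d 1 = 1 := by
  have : 1 % (d+1) = 1 := Nat.mod_eq_of_lt (by omega)
  simp [wgt, this]

lemma wgt_mid (d a : ℕ) (h2 : 2 ≤ a) (hle : a ≤ d+1) : wgt d a = Polynomial.X := by
  rcases eq_or_lt_of_le hle with h | h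
  · simp [wgt, h, Nat.mod_self]
  · have : a % (d+1) = a := Nat.mod_eq_of_lt h
    simp [wgt, this]
    omega

lemma wgt_period (d a : ℕ) : wgt d (a + (d+1)) = wgt d a := by
  simp [wgt, Nat.add_mod_right]

lemma Gs_base (d : ℕ) (hd : 1 ≤ d) :
    ∀ r ≤ d, (1 - PowerSeries.X) * (1 - tt * PowerSeries.X) ^ r * Gs d (r+1) = 1 := by
  intro r
  induction r with
  | zero =>
    intro _
    have := Gs_step d 0
    rw [wgt_one d hd] at this
    simpa using this
  | succ r ih =>
    intro hr
    have h1 := ih (by omega)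
    have h2 := Gs_step d (r+1)
    rw [wgt_mid d (r+2) (by omega) (by omega)] at h2
    calc (1 - PowerSeries.X) * (1 - tt * PowerSeries.X) ^ (r+1) * Gs d (r+2)
        = (1 - PowerSeries.X) * (1 - tt * PowerSeries.X) ^ r *
            ((1 - PowerSeries.C Polynomial.X * PowerSeries.X) * Gs d (r+2)) := by
          ring
      _ = 1 := by rw [h2, h1]

lemma one_sub_ne_zero (u : Polynomial ℤ) :
    (1 - PowerSeries.C u * PowerSeries.X : PowerSeries (Polynomial ℤ)) ≠ 0 := by
  intro h
  have := congrArg (PowerSeries.constantCoeff) h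
  simp at this

lemma Bs_Gs (d : ℕ) (hd : 1 ≤ d) : ∀ m, Bs d * Gs d (m + (d+1)) = Gs d m := by
  intro m
  induction m with
  | zero =>
    have := Gs_base d hd d le_rfl
    simpa [Bs] using this
  | succ m ih =>
    have h1 : m + 1 + (d+1) = (m + (d+1)) + 1 := by omega
    have h2 := Gs_step d (m + (d+1))
    have hw : wgt d (m + (d+1) + 1) = wgt d (m+1) := by
      rw [show m + (d+1) + 1 = (m+1) + (d+1) by omega, wgt_period]
    rw [hw] at h2
    have h3 := Gs_step d m
    have key : (1 - PowerSeries.C (wgt d (m+1)) * PowerSeries.X) *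
        (Bs d * Gs d (m + 1 + (d+1))) =
        (1 - PowerSeries.C (wgt d (m+1)) * PowerSeries.X) * Gs d (m+1) := by
      rw [h3, h1]
      calc (1 - PowerSeries.C (wgt d (m+1)) * PowerSeries.X) *
          (Bs d * Gs d ((m + (d+1)) + 1))
          = Bs d * ((1 - PowerSeries.C (wgt d (m+1)) * PowerSeries.X) *
              Gs d ((m + (d+1)) + 1)) := by ring
        _ = Bs d * Gs d (m + (d+1)) := by rw [h2]
        _ = Gs d m := ih
    exact mul_left_cancel₀ (one_sub_ne_zero _) key

noncomputable def FN (d N : ℕ) : PowerSeries (Polynomial ℤ) :=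
  ∑ m ∈ Finset.Icc 1 N, PowerSeries.C (wgt d m) * PowerSeries.X ^ m * Gs d m

noncomputable def Fps (d : ℕ) : PowerSeries (Polynomial ℤ) := PowerSeries.mk (cfun d)

lemma FN_shift (d N : ℕ) (hd : 1 ≤ d) :
    Bs d * FN d (N + (d+1)) = Bs d * FN d (d+1) + PowerSeries.X ^ (d+1) * FN d N := by
  have hsplit : Finset.Icc 1 (N + (d+1)) =
      Finset.Icc 1 (d+1) ∪ Finset.Icc (d+2) (N + (d+1)) := by
    ext a
    simp only [Finset.mem_Icc, Finset.mem_union]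
    omega
  have hdisj : Disjoint (Finset.Icc 1 (d+1)) (Finset.Icc (d+2) (N + (d+1))) := by
    rw [Finset.disjoint_left]
    intro a ha hb
    simp only [Finset.mem_Icc] at ha hb
    omega
  rw [FN, hsplit, Finset.sum_union hdisj, mul_add]
  refine congrArg₂ (· + ·) (by rw [FN]) ?_
  have himg : Finset.Icc (d+2) (N + (d+1)) = (Finset.Icc 1 N).image (· + (d+1)) := by
    rw [Finset.image_add_right_Icc]
    congr 1
    omega
  rw [himg, Finset.sum_image (by intro a _ b _ h; simp only at h; omega), Finset.mul_sum, FN,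
    Finset.mul_sum]
  refine Finset.sum_congr rfl fun m hm => ?_
  rw [wgt_period]
  calc Bs d * (PowerSeries.C (wgt d m) * PowerSeries.X ^ (m + (d+1)) * Gs d (m + (d+1)))
      = PowerSeries.C (wgt d m) * PowerSeries.X ^ (m + (d+1)) *
          (Bs d * Gs d (m + (d+1))) := by ring
    _ = PowerSeries.C (wgt d m) * PowerSeries.X ^ (m + (d+1)) * Gs d m := by
        rw [Bs_Gs d hd]
    _ = PowerSeries.X ^ (d+1) * (PowerSeries.C (wgt d m) * PowerSeries.X ^ m * Gs d m) := by
        rw [pow_add]; ring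

lemma coeff_FN (d N n : ℕ) (h : n ≤ N) :
    PowerSeries.coeff n (FN d N) = cfun d n := by
  rw [FN, map_sum, cfun]
  rw [show Finset.Icc 1 N = Finset.Icc 1 n ∪ Finset.Icc (n+1) N by
    ext a
    simp only [Finset.mem_Icc, Finset.mem_union]
    omega]
  have hdisj : Disjoint (Finset.Icc 1 n) (Finset.Icc (n+1) N) := by
    rw [Finset.disjoint_left]; intro a ha hb
    simp only [Finset.mem_Icc] at ha hb; omega
  rw [Finset.sum_union hdisj]
  have h2 : ∀ m ∈ Finset.Icc (n+1) N,
      PowerSeries.coeff n (PowerSeries.C (wgt d m) * PowerSeries.X ^ m * Gs d m) = 0 := by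
    intro m hm
    simp only [Finset.mem_Icc] at hm
    rw [mul_assoc, coeff_C_mul, coeff_X_pow_mul', if_neg (by omega), mul_zero]
  rw [Finset.sum_eq_zero h2, add_zero]
  refine Finset.sum_congr rfl fun m hm => ?_
  simp only [Finset.mem_Icc] at hm
  rw [mul_assoc, coeff_C_mul, coeff_X_pow_mul', if_pos (by omega), Gs, coeff_mk]

lemma coeff_mul_zero_of_lt (f g : PowerSeries (Polynomial ℤ)) (n : ℕ)
    (h : ∀ k ≤ n, PowerSeries.coeff k g = 0) :
    PowerSeries.coeff n (f * g) = 0 := by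
  rw [coeff_mul]
  refine Finset.sum_eq_zero fun p hp => ?_
  rw [Finset.HasAntidiagonal.mem_antidiagonal] at hp
  rw [h p.2 (by omega), mul_zero]

lemma Fps_eq (d : ℕ) (hd : 1 ≤ d) :
    Fps d * (Bs d - PowerSeries.X ^ (d+1)) = Bs d * FN d (d+1) := by
  ext n
  have key : ∀ (N : ℕ) (h : n ≤ N) (f : PowerSeries (Polynomial ℤ)),
      PowerSeries.coeff n (f * Fps d) = PowerSeries.coeff n (f * FN d N) := by
    intro N hN f
    have hzero : ∀ k ≤ n, PowerSeries.coeff k (Fps d - FN d N) = 0 := by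
      intro k hk
      rw [map_sub, coeff_FN d N k (by omega), Fps, coeff_mk, sub_self]
    have := coeff_mul_zero_of_lt f (Fps d - FN d N) n hzero
    rw [mul_sub, map_sub, sub_eq_zero] at this
    exact this
  have e1 : PowerSeries.coeff n (Fps d * (Bs d - PowerSeries.X ^ (d+1))) =
      PowerSeries.coeff n (Bs d * Fps d) - PowerSeries.coeff n
        (PowerSeries.X ^ (d+1) * Fps d) := by
    rw [mul_sub, map_sub, mul_comm (Fps d), mul_comm (Fps d)]
  rw [e1, key (n + (d+1)) (by omega) (Bs d), key n le_rfl (PowerSeries.X ^ (d+1)),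
    FN_shift d n hd]
  simp

lemma BsFN_eq (d : ℕ) (hd : 1 ≤ d) :
    Bs d * FN d (d+1) = PowerSeries.X * (1 - tt * PowerSeries.X) ^ d +
      tt * ∑ r ∈ Finset.Icc 2 (d+1), PowerSeries.X ^ r * (1 - tt * PowerSeries.X) ^ (d+1-r) := by
  rw [FN, Finset.mul_sum]
  have hterm : ∀ r ∈ Finset.Icc 1 (d+1),
      Bs d * (PowerSeries.C (wgt d r) * PowerSeries.X ^ r * Gs d r) =
        PowerSeries.C (wgt d r) * (PowerSeries.X ^ r * (1 - tt * PowerSeries.X) ^ (d+1-r)) := by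
    intro r hr
    simp only [Finset.mem_Icc] at hr
    obtain ⟨r', rfl⟩ : ∃ r', r = r' + 1 := ⟨r - 1, by omega⟩
    have hbase := Gs_base d hd r' (by omega)
    have hBs : Bs d = (1 - tt * PowerSeries.X) ^ (d - r') *
        ((1 - PowerSeries.X) * (1 - tt * PowerSeries.X) ^ r') := by
      rw [Bs]
      conv_lhs => rw [show d = (d - r') + r' by omega]
      rw [pow_add]
      ring
    calc Bs d * (PowerSeries.C (wgt d (r'+1)) * PowerSeries.X ^ (r'+1) * Gs d (r'+1))
        = PowerSeries.C (wgt d (r'+1)) * ((1 - tt * PowerSeries.X) ^ (d - r') *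
            PowerSeries.X ^ (r'+1)) *
            ((1 - PowerSeries.X) * (1 - tt * PowerSeries.X) ^ r' * Gs d (r'+1)) := by
          rw [hBs]; ring
      _ = PowerSeries.C (wgt d (r'+1)) *
            (PowerSeries.X ^ (r'+1) * (1 - tt * PowerSeries.X) ^ (d+1-(r'+1))) := by
          rw [hbase, show d + 1 - (r'+1) = d - r' by omega]; ring
  rw [Finset.sum_congr rfl hterm]
  rw [show Finset.Icc 1 (d+1) = insert 1 (Finset.Icc 2 (d+1)) by
    ext a
    simp only [Finset.mem_Icc, Finset.mem_insert]
    omega]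
  rw [Finset.sum_insert (by simp), wgt_one d hd]
  congr 1
  · rw [show d + 1 - 1 = d by omega]
    simp
  · rw [Finset.mul_sum]
    refine Finset.sum_congr rfl fun r hr => ?_
    simp only [Finset.mem_Icc] at hr
    rw [wgt_mid d r hr.1 hr.2]

lemma telescope (d : ℕ) (hd : 1 ≤ d) :
    (1 - PowerSeries.X - tt * PowerSeries.X) *
      ∑ r ∈ Finset.Icc 2 (d+1), PowerSeries.X ^ r * (1 - tt * PowerSeries.X) ^ (d+1-r) =
    PowerSeries.X ^ 2 * (1 - tt * PowerSeries.X) ^ d - PowerSeries.X ^ (d+2) := by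
  induction d with
  | zero => omega
  | succ k ih =>
    rcases Nat.eq_zero_or_pos k with rfl | hk
    · rw [show Finset.Icc 2 (0+1+1) = {2} by rfl, Finset.sum_singleton]
      rw [show 0 + 1 + 1 - 2 = 0 by rfl, pow_zero]
      ring
    · have step : ∑ r ∈ Finset.Icc 2 (k+2), PowerSeries.X ^ r *
          (1 - tt * PowerSeries.X) ^ (k+2-r) =
          (1 - tt * PowerSeries.X) * (∑ r ∈ Finset.Icc 2 (k+1), PowerSeries.X ^ r *
            (1 - tt * PowerSeries.X) ^ (k+1-r)) + PowerSeries.X ^ (k+2) := by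
        rw [show Finset.Icc 2 (k+2) = insert (k+2) (Finset.Icc 2 (k+1)) by
          exact (Finset.insert_Icc_right_eq_Icc_add_one (by omega : 2 ≤ k + 1 + 1)).symm]
        rw [Finset.sum_insert (by simp), Finset.mul_sum]
        rw [show k + 2 - (k+2) = 0 by omega, pow_zero, mul_one, add_comm]
        refine congrArg (· + PowerSeries.X ^ (k+2)) ?_
        refine Finset.sum_congr rfl fun r hr => ?_
        simp only [Finset.mem_Icc] at hr
        rw [show k + 2 - r = (k+1-r) + 1 by omega, pow_succ]
        ring
      have expand : ∀ S : PowerSeries (Polynomial ℤ),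
          (1 - PowerSeries.X - tt * PowerSeries.X) *
            ((1 - tt * PowerSeries.X) * S + PowerSeries.X ^ (k+2)) =
          (1 - tt * PowerSeries.X) * ((1 - PowerSeries.X - tt * PowerSeries.X) * S) +
            (1 - PowerSeries.X - tt * PowerSeries.X) * PowerSeries.X ^ (k+2) := by
        intro S; ring
      rw [step, expand, ih hk]
      ring

end GFAux

theorem gen_fun_mod (d : ℕ) (hd : 1 ≤ d) :
    letI t : Polynomial ℤ := Polynomial.X
    (PowerSeries.mk fun n =>
        ∑ᶠ l ∈ {l : List ℕ | IsPartition l ∧ perim l = n}, t ^ modStat d l) *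
      ((1 - PowerSeries.X - PowerSeries.C t * PowerSeries.X) *
        ((1 - PowerSeries.C t * PowerSeries.X) ^ d * (PowerSeries.X - 1)
          + PowerSeries.X ^ (d + 1))) =
    PowerSeries.X *
      (PowerSeries.C t * PowerSeries.X ^ (d + 1)
        + (1 - PowerSeries.C t * PowerSeries.X) ^ d * (PowerSeries.X - 1)) := by
  show (PowerSeries.mk fun n =>
        ∑ᶠ l ∈ {l : List ℕ | IsPartition l ∧ perim l = n},
          (Polynomial.X : Polynomial ℤ) ^ modStat d l) *
      ((1 - PowerSeries.X - GFAux.tt * PowerSeries.X) *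
        ((1 - GFAux.tt * PowerSeries.X) ^ d * (PowerSeries.X - 1)
          + PowerSeries.X ^ (d + 1))) =
    PowerSeries.X * (GFAux.tt * PowerSeries.X ^ (d + 1)
        + (1 - GFAux.tt * PowerSeries.X) ^ d * (PowerSeries.X - 1))
  have hmk : (PowerSeries.mk fun n =>
      ∑ᶠ l ∈ {l : List ℕ | IsPartition l ∧ perim l = n},
        (Polynomial.X : Polynomial ℤ) ^ modStat d l) = GFAux.Fps d := by
    refine PowerSeries.ext fun n => ?_
    rw [PowerSeries.coeff_mk, GFAux.Fps, PowerSeries.coeff_mk]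
    exact finsum_part d n
  rw [hmk]
  have h2 := GFAux.Fps_eq d hd
  have h3 := GFAux.BsFN_eq d hd
  have h4 := GFAux.telescope d hd
  set T := ∑ r ∈ Finset.Icc 2 (d+1),
    PowerSeries.X ^ r * (1 - GFAux.tt * PowerSeries.X) ^ (d+1-r) with hT
  calc GFAux.Fps d * ((1 - PowerSeries.X - GFAux.tt * PowerSeries.X) *
        ((1 - GFAux.tt * PowerSeries.X) ^ d * (PowerSeries.X - 1) + PowerSeries.X ^ (d + 1)))
      = -((1 - PowerSeries.X - GFAux.tt * PowerSeries.X) *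
          (GFAux.Fps d * (GFAux.Bs d - PowerSeries.X ^ (d+1)))) := by
        rw [GFAux.Bs]; ring
    _ = -((1 - PowerSeries.X - GFAux.tt * PowerSeries.X) *
          (GFAux.Bs d * GFAux.FN d (d+1))) := by rw [h2]
    _ = -((1 - PowerSeries.X - GFAux.tt * PowerSeries.X) *
          (PowerSeries.X * (1 - GFAux.tt * PowerSeries.X) ^ d + GFAux.tt * T)) := by rw [h3]
    _ = -(PowerSeries.X * (1 - PowerSeries.X - GFAux.tt * PowerSeries.X) *
          (1 - GFAux.tt * PowerSeries.X) ^ d) -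
        GFAux.tt * ((1 - PowerSeries.X - GFAux.tt * PowerSeries.X) * T) := by ring
    _ = -(PowerSeries.X * (1 - PowerSeries.X - GFAux.tt * PowerSeries.X) *
          (1 - GFAux.tt * PowerSeries.X) ^ d) -
        GFAux.tt * (PowerSeries.X ^ 2 * (1 - GFAux.tt * PowerSeries.X) ^ d -
          PowerSeries.X ^ (d+2)) := by rw [h4]
    _ = PowerSeries.X * (GFAux.tt * PowerSeries.X ^ (d + 1)
          + (1 - GFAux.tt * PowerSeries.X) ^ d * (PowerSeries.X - 1)) := by ring
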